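/- arXiv:2512.00955 — 3 statements merged into one kernel-verified Lean document; each statement's English description precedes it below -/
import Mathlib

section
/- For a random variable X supported on [a,b] with variance equal to ((b-a)/2)², the distribution of X places mass 1/2 at a and mass 1/2 at b. -/
open MeasureTheory ProbabilityTheory

/-- If a random variable `X` takes values in `[a,b]` a.s. (with `a < b`) and has
variance `((b-a)/2)^2`, then its distribution places mass `1/2` at `a` and `1/2` at `b`. -/
theorem stmt1 {Ω : Type*} [MeasureSpace Ω] [IsProbabilityMeasure (ℙ : Measure Ω)]
    (X : Ω → ℝ) (a b : ℝ) (hab : a < b)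
    (hmeas : Measurable X) (hX : MemLp X 2 ℙ)
    (hbdd : ∀ᵐ ω, X ω ∈ Set.Icc a b)
    (hvar : variance X ℙ = ((b - a) / 2) ^ 2) :
    ℙ {ω | X ω = a} = 1 / 2 ∧ ℙ {ω | X ω = b} = 1 / 2 := by
  have hXi : Integrable X ℙ := hX.integrable one_le_two
  have hX2 : Integrable (fun ω => X ω ^ 2) ℙ := hX.integrable_sq
  have hY : MemLp (fun ω => X ω - (a + b) / 2) 2 ℙ := hX.sub (memLp_const _)
  have hY2 : Integrable (fun ω => (X ω - (a + b) / 2) ^ 2) ℙ := hY.integrable_sq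
  set μX := ∫ ω, X ω with hμ
  -- expand the second moment around the midpoint
  have hI : ∫ ω, (X ω - (a + b) / 2) ^ 2
      = variance X ℙ + (μX - (a + b) / 2) ^ 2 := by
    have h1 : ∫ ω, (X ω - (a + b) / 2) ^ 2
        = (∫ ω, X ω ^ 2) - 2 * ((a + b) / 2) * μX + ((a + b) / 2) ^ 2 := by
      have he : (fun ω => (X ω - (a + b) / 2) ^ 2)
          = fun ω => (X ω ^ 2 - (2 * ((a + b) / 2)) * X ω) + ((a + b) / 2) ^ 2 := by
        funext ω; ring
      have hi1 : Integrable (fun ω => X ω ^ 2 - 2 * ((a + b) / 2) * X ω) ℙ :=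
        hX2.sub (hXi.const_mul _)
      rw [he, integral_add hi1 (integrable_const _),
        integral_sub hX2 (hXi.const_mul _), integral_const_mul, integral_const]
      simp [measure_univ, hμ]
    rw [h1, variance_eq_sub hX]
    simp only [Pi.pow_apply]
    ring
  have hbound : ∀ᵐ ω ∂ℙ, (X ω - (a + b) / 2) ^ 2 ≤ ((b - a) / 2) ^ 2 := by
    filter_upwards [hbdd] with ω hω
    exact sq_le_sq' (by simp at hω ⊢; linarith [hω.1, hω.2]) (by simp at hω ⊢; linarith [hω.1, hω.2])
  have hIle : ∫ ω, (X ω - (a + b) / 2) ^ 2 ≤ ((b - a) / 2) ^ 2 := by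
    calc ∫ ω, (X ω - (a + b) / 2) ^ 2 ≤ ∫ _ω, ((b - a) / 2) ^ 2 :=
        integral_mono_ae hY2 (integrable_const _) hbound
      _ = ((b - a) / 2) ^ 2 := by simp [measure_univ]
  have hμm : μX = (a + b) / 2 := by
    have hle : (μX - (a + b) / 2) ^ 2 ≤ 0 := by
      rw [hI, hvar] at hIle; linarith
    have := le_antisymm hle (sq_nonneg _)
    have := sq_eq_zero_iff.mp this
    linarith [this]
  have hIeq : ∫ ω, (X ω - (a + b) / 2) ^ 2 = ((b - a) / 2) ^ 2 := by
    rw [hI, hvar, hμm]; ring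
  -- the slack is a.e. zero
  have hzero : (fun ω => ((b - a) / 2) ^ 2 - (X ω - (a + b) / 2) ^ 2) =ᵐ[ℙ] 0 := by
    have hint : Integrable (fun ω => ((b - a) / 2) ^ 2 - (X ω - (a + b) / 2) ^ 2) ℙ :=
      (integrable_const _).sub hY2
    have hpos : 0 ≤ᵐ[ℙ] fun ω => ((b - a) / 2) ^ 2 - (X ω - (a + b) / 2) ^ 2 := by
      filter_upwards [hbound] with ω hω
      simp only [Pi.zero_apply]
      linarith
    refine (integral_eq_zero_iff_of_nonneg_ae hpos hint).mp ?_
    rw [integral_sub (integrable_const _) hY2, hIeq, integral_const]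
    simp [measure_univ]
  have hab2 : ∀ᵐ ω ∂ℙ, X ω = a ∨ X ω = b := by
    filter_upwards [hzero] with ω hω
    simp only [Pi.zero_apply] at hω
    have h0 : (X ω - a) * (X ω - b) = 0 := by nlinarith [hω]
    rcases mul_eq_zero.mp h0 with h | h
    · exact Or.inl (by linarith)
    · exact Or.inr (by linarith)
  set A := {ω | X ω = a} with hA
  set B := {ω | X ω = b} with hB
  have hAm : MeasurableSet A := hmeas (measurableSet_singleton a)
  have hBm : MeasurableSet B := hmeas (measurableSet_singleton b)
  have hdisj : Disjoint A B := by
    rw [Set.disjoint_left]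
    intro ω hωA hωB
    simp only [hA, hB, Set.mem_setOf_eq] at hωA hωB
    exact absurd (hωA ▸ hωB) hab.ne
  have hunion : ℙ (A ∪ B) = 1 := by
    have h0 : ℙ (A ∪ B)ᶜ = 0 := by
      have h := hab2
      rw [ae_iff] at h
      have he2 : (A ∪ B)ᶜ = {ω | ¬(X ω = a ∨ X ω = b)} := by
        ext ω; simp [hA, hB]
      rw [he2]; exact h
    have h1 := measure_add_measure_compl (μ := ℙ) (hAm.union hBm)
    rw [h0, add_zero, measure_univ] at h1
    exact h1
  have hsum : ℙ A + ℙ B = 1 := by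
    rw [← measure_union hdisj hBm, hunion]
  -- compute E[X - a]
  have hEB : ∫ ω, (X ω - a) = (b - a) * (ℙ B).toReal := by
    have hcong : (fun ω => X ω - a) =ᵐ[ℙ] B.indicator (fun _ => b - a) := by
      filter_upwards [hab2] with ω hω
      rcases hω with h | h
      · have hnB : ω ∉ B := by simp [hB, Set.mem_setOf_eq, h]; linarith
        simp [Set.indicator_of_notMem hnB, h]
      · have hmB : ω ∈ B := by simp [hB, Set.mem_setOf_eq, h]
        simp [Set.indicator_of_mem hmB, h]
    rw [integral_congr_ae hcong, integral_indicator_const _ hBm]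
    simp [mul_comm, Measure.real]
  have hEB2 : ∫ ω, (X ω - a) = (b - a) / 2 := by
    rw [integral_sub hXi (integrable_const _), integral_const]
    simp [measure_univ, ← hμ]
    rw [hμm]; ring
  have hq : (ℙ B).toReal = 1 / 2 := by
    have hba : b - a ≠ 0 := by linarith
    have := hEB.symm.trans hEB2
    field_simp at this
    nlinarith [this]
  have hPB : ℙ B = 1 / 2 := by
    have hfin : ℙ B ≠ ⊤ := measure_ne_top _ _
    rw [← ENNReal.ofReal_toReal hfin, hq]
    rw [ENNReal.ofReal_div_of_pos (by norm_num)]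
    norm_num
  have hPA : ℙ A = 1 / 2 := by
    have ht : (ℙ A).toReal + (ℙ B).toReal = 1 := by
      rw [← ENNReal.toReal_add (measure_ne_top _ _) (measure_ne_top _ _), hsum]
      simp
    rw [hq] at ht
    have hp : (ℙ A).toReal = 1 / 2 := by linarith
    rw [← ENNReal.ofReal_toReal (measure_ne_top ℙ A), hp,
      ENNReal.ofReal_div_of_pos (by norm_num)]
    norm_num
  exact ⟨hPA, hPB⟩
end

section
/- Latent-factor monotonicity (strict, via eigenspace overlap): Let Γ ∈ ℝ^{p×p} be symmetric PSD and β ∈ ℝ^p. If β has nonzero projection onto the eigenspace of Γ for its largest eigenvalue, then the map a ↦ ‖aββᵀ + Γ‖₂ is strictly increasing on (0, ∞). -/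
open Matrix MeasureTheory ProbabilityTheory BigOperators Filter

/-- The spectral norm (operator 2-norm) of a real matrix. -/
noncomputable def spec {p : ℕ} (A : Matrix (Fin p) (Fin p) ℝ) : ℝ :=
  ‖LinearMap.toContinuousLinearMap (Matrix.toEuclideanLin A)‖

/-- The Frobenius norm of a real matrix. -/
noncomputable def frob {p : ℕ} (A : Matrix (Fin p) (Fin p) ℝ) : ℝ :=
  Real.sqrt (∑ i, ∑ j, (A i j) ^ 2)

namespace Stmt13Aux

variable {p : ℕ}

noncomputable def T (A : Matrix (Fin p) (Fin p) ℝ) :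
    EuclideanSpace ℝ (Fin p) →L[ℝ] EuclideanSpace ℝ (Fin p) :=
  LinearMap.toContinuousLinearMap (Matrix.toEuclideanLin A)

lemma spec_eq (A : Matrix (Fin p) (Fin p) ℝ) : spec A = ‖T A‖ := rfl

lemma T_apply (A : Matrix (Fin p) (Fin p) ℝ) (x : EuclideanSpace ℝ (Fin p)) (i : Fin p) :
    T A x i = (A *ᵥ (WithLp.equiv 2 _ x)) i := rfl

lemma inner_T (A : Matrix (Fin p) (Fin p) ℝ) (x : EuclideanSpace ℝ (Fin p)) :
    (inner ℝ (T A x) x : ℝ) = (A *ᵥ (WithLp.equiv 2 _ x)) ⬝ᵥ (WithLp.equiv 2 _ x) := by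
  simp [PiLp.inner_apply, dotProduct, T_apply, mul_comm]

end Stmt13Aux

namespace Stmt13Aux

variable {p : ℕ}

lemma inner_le_spec (A : Matrix (Fin p) (Fin p) ℝ) (x : EuclideanSpace ℝ (Fin p))
    (hx : ‖x‖ = 1) : (inner ℝ (T A x) x : ℝ) ≤ spec A := by
  calc (inner ℝ (T A x) x : ℝ) ≤ ‖T A x‖ * ‖x‖ := real_inner_le_norm _ _
    _ ≤ ‖T A‖ * ‖x‖ * ‖x‖ := by
        have := (T A).le_opNorm x
        nlinarith [norm_nonneg x, norm_nonneg (T A x)]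
    _ = spec A := by rw [hx, spec_eq]; ring

lemma spec_le (A : Matrix (Fin p) (Fin p) ℝ) (hA : A.IsHermitian) (c : ℝ) (hc : 0 ≤ c)
    (hub : ∀ x : EuclideanSpace ℝ (Fin p), ‖x‖ = 1 →
      0 ≤ (inner ℝ (T A x) x : ℝ) ∧ (inner ℝ (T A x) x : ℝ) ≤ c) :
    spec A ≤ c := by
  classical
  set b := hA.eigenvectorBasis with hbdef
  have hTb : ∀ i, T A (b i) = hA.eigenvalues i • b i := by
    intro i
    have h := hA.mulVec_eigenvectorBasis i
    ext j
    have := congrFun h j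
    simpa [T_apply, Pi.smul_apply] using this
  have hbnorm : ∀ i, ‖b i‖ = 1 := fun i => b.orthonormal.1 i
  have heig : ∀ i, |hA.eigenvalues i| ≤ c := by
    intro i
    have hq : (inner ℝ (T A (b i)) (b i) : ℝ) = hA.eigenvalues i := by
      rw [hTb i, real_inner_smul_left, real_inner_self_eq_norm_sq, hbnorm i]
      ring
    have := hub (b i) (hbnorm i)
    rw [hq] at this
    rw [abs_le]; constructor <;> linarith [this.1, this.2]
  rw [spec_eq]
  apply ContinuousLinearMap.opNorm_le_bound _ hc
  intro x
  have hsym : (Matrix.toEuclideanLin A).IsSymmetric :=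
    Matrix.isHermitian_iff_isSymmetric.mp hA
  have hrep : ∀ i, (inner ℝ (b i) (T A x) : ℝ) = hA.eigenvalues i * (inner ℝ (b i) x : ℝ) := by
    intro i
    have h1 : (inner ℝ (b i) (T A x) : ℝ) = (inner ℝ (T A (b i)) x : ℝ) := by
      have := hsym (b i) x
      simpa [T] using this.symm
    rw [h1, hTb i, real_inner_smul_left]
  have key : ∀ y : EuclideanSpace ℝ (Fin p), ‖y‖ ^ 2 = ∑ i, (inner ℝ (b i) y : ℝ) ^ 2 := by
    intro y
    have h := b.sum_inner_mul_inner y y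
    rw [real_inner_self_eq_norm_sq] at h
    rw [← h]
    refine Finset.sum_congr rfl fun i _ => ?_
    rw [real_inner_comm y (b i)]; ring
  have h1 : ‖T A x‖ ^ 2 ≤ (c * ‖x‖) ^ 2 := by
    rw [key (T A x)]
    have h2 : ∀ i ∈ Finset.univ, ((inner ℝ (b i) (T A x) : ℝ)) ^ 2
        ≤ c ^ 2 * ((inner ℝ (b i) x : ℝ)) ^ 2 := by
      intro i _
      rw [hrep i, mul_pow]
      have := heig i
      have h3 : (hA.eigenvalues i) ^ 2 ≤ c ^ 2 :=
        sq_le_sq' (abs_le.mp this).1 (abs_le.mp this).2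
      nlinarith [sq_nonneg ((inner ℝ (b i) x : ℝ))]
    calc ∑ i, ((inner ℝ (b i) (T A x) : ℝ)) ^ 2 ≤ ∑ i, c ^ 2 * ((inner ℝ (b i) x : ℝ)) ^ 2 :=
          Finset.sum_le_sum h2
      _ = c ^ 2 * ∑ i, ((inner ℝ (b i) x : ℝ)) ^ 2 := by rw [Finset.mul_sum]
      _ = (c * ‖x‖) ^ 2 := by rw [← key x]; ring
  nlinarith [norm_nonneg (T A x), norm_nonneg x, mul_nonneg hc (norm_nonneg x)]

end Stmt13Aux

namespace Stmt13Aux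

variable {p : ℕ}

lemma vvm (β y : Fin p → ℝ) : Matrix.vecMulVec β β *ᵥ y = (β ⬝ᵥ y) • β := by
  ext i
  simp only [Matrix.mulVec, dotProduct, Matrix.vecMulVec_apply, Pi.smul_apply,
    smul_eq_mul, Finset.sum_mul]
  exact Finset.sum_congr rfl fun j _ => by ring

lemma inner_T_add (a : ℝ) (β : Fin p → ℝ) (Γ : Matrix (Fin p) (Fin p) ℝ)
    (x : EuclideanSpace ℝ (Fin p)) :
    (inner ℝ (T (a • Matrix.vecMulVec β β + Γ) x) x : ℝ)
      = a * (β ⬝ᵥ (WithLp.equiv 2 _ x)) ^ 2 + (inner ℝ (T Γ x) x : ℝ) := by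
  rw [inner_T, inner_T]
  rw [Matrix.add_mulVec, Matrix.smul_mulVec, vvm, add_dotProduct,
    smul_dotProduct, smul_dotProduct]
  simp only [smul_eq_mul]
  ring

lemma hermit (a : ℝ) (β : Fin p → ℝ) (Γ : Matrix (Fin p) (Fin p) ℝ) (hΓ : Γ.IsHermitian) :
    (a • Matrix.vecMulVec β β + Γ).IsHermitian := by
  have hvv : (Matrix.vecMulVec β β).IsHermitian := by
    ext i j
    simp [Matrix.conjTranspose_apply, Matrix.vecMulVec_apply, mul_comm]
  have h1 : (a • Matrix.vecMulVec β β).IsHermitian := by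
    unfold Matrix.IsHermitian at hvv ⊢
    rw [Matrix.conjTranspose_smul, hvv]
    simp
  exact h1.add hΓ

end Stmt13Aux

open Stmt13Aux

/-- Latent-factor monotonicity (strict, via eigenspace overlap): if `β` has nonzero
projection onto the top eigenspace of a symmetric PSD matrix `Γ`, then
`a ↦ ‖a ββᵀ + Γ‖₂` is strictly increasing on `(0, ∞)`. -/
theorem stmt13 {p : ℕ} (Γ : Matrix (Fin p) (Fin p) ℝ) (hΓ : Γ.PosSemidef)
    (β : Fin p → ℝ)
    (hproj : ∃ v : Fin p → ℝ, Γ.mulVec v = spec Γ • v ∧ dotProduct β v ≠ 0) :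
    StrictMonoOn (fun a : ℝ => spec (a • Matrix.vecMulVec β β + Γ)) (Set.Ioi 0) := by
  intro a ha b hb hab
  simp only [Set.mem_Ioi] at ha hb
  show spec (a • Matrix.vecMulVec β β + Γ) < spec (b • Matrix.vecMulVec β β + Γ)
  obtain ⟨v, hv, hβv⟩ := hproj
  have hv0 : v ≠ 0 := by rintro rfl; exact hβv (by simp)
  set vE : EuclideanSpace ℝ (Fin p) := (WithLp.equiv 2 _).symm v with hvE
  have hvE0 : vE ≠ 0 := by
    intro h
    apply hv0
    have := congrArg (WithLp.equiv 2 (Fin p → ℝ)) h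
    simpa [hvE] using this
  set u : EuclideanSpace ℝ (Fin p) := ‖vE‖⁻¹ • vE with hu
  have hun : ‖u‖ = 1 := norm_smul_inv_norm hvE0
  have huf : (WithLp.equiv 2 (Fin p → ℝ)) u = ‖vE‖⁻¹ • v := rfl
  -- q Γ u = spec Γ
  have hTu : T Γ u = spec Γ • u := by
    ext i
    show (Γ *ᵥ (‖vE‖⁻¹ • v)) i = (spec Γ • u) i
    rw [Matrix.mulVec_smul, hv]
    show (‖vE‖⁻¹ • spec Γ • v) i = (spec Γ • ‖vE‖⁻¹ • vE) i
    rw [smul_comm]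
    rfl
  have hqΓu : (inner ℝ (T Γ u) u : ℝ) = spec Γ := by
    rw [hTu, real_inner_smul_left, real_inner_self_eq_norm_sq, hun]
    ring
  have hβu : β ⬝ᵥ ((WithLp.equiv 2 (Fin p → ℝ)) u) ≠ 0 := by
    rw [huf, dotProduct_smul]
    simp only [smul_eq_mul]
    exact mul_ne_zero (inv_ne_zero (norm_ne_zero_iff.mpr hvE0)) hβv
  -- nonnegativity of quadratic form of Γ
  have hqΓ : ∀ x : EuclideanSpace ℝ (Fin p), 0 ≤ (inner ℝ (T Γ x) x : ℝ) := by
    intro x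
    rw [inner_T]
    have := hΓ.dotProduct_mulVec_nonneg ((WithLp.equiv 2 (Fin p → ℝ)) x)
    rw [dotProduct_comm]
    simpa using this
  -- maximizer for the a-matrix
  set Ma := a • Matrix.vecMulVec β β + Γ with hMa
  set Mb := b • Matrix.vecMulVec β β + Γ with hMb
  have hcont : Continuous fun x : EuclideanSpace ℝ (Fin p) => (inner ℝ (T Ma x) x : ℝ) :=
    Continuous.inner (T Ma).continuous continuous_id
  have hne : (Metric.sphere (0 : EuclideanSpace ℝ (Fin p)) 1).Nonempty :=
    ⟨u, by rwa [mem_sphere_zero_iff_norm]⟩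
  obtain ⟨x₀, hx₀s, hx₀max⟩ :=
    (isCompact_sphere (0 : EuclideanSpace ℝ (Fin p)) 1).exists_isMaxOn hne hcont.continuousOn
  have hx₀ : ‖x₀‖ = 1 := mem_sphere_zero_iff_norm.mp hx₀s
  have hqnn : ∀ x : EuclideanSpace ℝ (Fin p), 0 ≤ (inner ℝ (T Ma x) x : ℝ) := by
    intro x
    rw [hMa, inner_T_add]
    have := hqΓ x
    nlinarith [sq_nonneg (β ⬝ᵥ ((WithLp.equiv 2 (Fin p → ℝ)) x))]
  have hspecMa : spec Ma ≤ (inner ℝ (T Ma x₀) x₀ : ℝ) := by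
    apply spec_le Ma (hermit a β Γ hΓ.1) _ (hqnn x₀)
    intro x hx
    refine ⟨hqnn x, ?_⟩
    exact hx₀max (mem_sphere_zero_iff_norm.mpr hx)
  have hqb_u : (inner ℝ (T Mb u) u : ℝ) ≤ spec Mb := inner_le_spec Mb u hun
  have hqb_x₀ : (inner ℝ (T Mb x₀) x₀ : ℝ) ≤ spec Mb := inner_le_spec Mb x₀ hx₀
  set t := β ⬝ᵥ ((WithLp.equiv 2 (Fin p → ℝ)) x₀) with ht
  by_cases h0 : t = 0
  · -- spec Ma ≤ spec Γ < q Mb u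
    have h1 : (inner ℝ (T Ma x₀) x₀ : ℝ) ≤ spec Γ := by
      rw [hMa, inner_T_add, ← ht, h0]
      simpa using inner_le_spec Γ x₀ hx₀
    have h2 : spec Γ < (inner ℝ (T Mb u) u : ℝ) := by
      rw [hMb, inner_T_add, hqΓu]
      nlinarith [sq_nonneg (β ⬝ᵥ ((WithLp.equiv 2 (Fin p → ℝ)) u)),
        pow_pos (abs_pos.mpr hβu) 2, sq_abs (β ⬝ᵥ ((WithLp.equiv 2 (Fin p → ℝ)) u))]
    linarith
  · have h1 : (inner ℝ (T Ma x₀) x₀ : ℝ) < (inner ℝ (T Mb x₀) x₀ : ℝ) := by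
      rw [hMa, hMb, inner_T_add, inner_T_add, ← ht]
      have : 0 < t ^ 2 := by positivity
      nlinarith
    linarith
end

section
/- Latent-factor monotonicity (strict, via size): Let Γ ∈ ℝ^{p×p} be symmetric PSD and β ∈ ℝ^p a nonzero vector with ‖β‖ = 1. If a > ‖Γ‖₂, then the map t ↦ ‖tββᵀ + Γ‖₂ is strictly increasing at every t ≥ a; in particular ‖a'ββᵀ + Γ‖₂ > ‖aββᵀ + Γ‖₂ whenever a' > a > ‖Γ‖₂. -/
open Matrix MeasureTheory ProbabilityTheory BigOperators Filter

open scoped RealInnerProductSpace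

/-- auxiliary: the matrix as a continuous linear map on Euclidean space -/
noncomputable def Tm {p : ℕ} (M : Matrix (Fin p) (Fin p) ℝ) :
    EuclideanSpace ℝ (Fin p) →L[ℝ] EuclideanSpace ℝ (Fin p) :=
  LinearMap.toContinuousLinearMap (Matrix.toEuclideanLin M)

lemma spec_eq {p : ℕ} (M : Matrix (Fin p) (Fin p) ℝ) : spec M = ‖Tm M‖ := rfl

lemma inner_Tm {p : ℕ} (M : Matrix (Fin p) (Fin p) ℝ) (x y : EuclideanSpace ℝ (Fin p)) :
    ⟪Tm M x, y⟫ = ∑ i, (∑ j, M i j * x j) * y i := by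
  simp [Tm, Matrix.toEuclideanLin_apply, PiLp.inner_apply, Matrix.mulVec, dotProduct,
    RCLike.inner_apply, mul_comm]

lemma dot_eq {p : ℕ} (M : Matrix (Fin p) (Fin p) ℝ) (x : Fin p → ℝ) :
    dotProduct (star x) (M *ᵥ x)
      = ⟪Tm M ((WithLp.equiv 2 (Fin p → ℝ)).symm x), ((WithLp.equiv 2 (Fin p → ℝ)).symm x)⟫ := by
  rw [inner_Tm]
  simp [dotProduct, Matrix.mulVec, WithLp.equiv_symm_apply, mul_comm]

lemma inner_le_spec {p : ℕ} (M : Matrix (Fin p) (Fin p) ℝ) (x : EuclideanSpace ℝ (Fin p)) :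
    ⟪Tm M x, x⟫ ≤ spec M * (‖x‖ * ‖x‖) := by
  calc ⟪Tm M x, x⟫ ≤ ‖Tm M x‖ * ‖x‖ := real_inner_le_norm _ _
    _ ≤ (‖Tm M‖ * ‖x‖) * ‖x‖ :=
        mul_le_mul_of_nonneg_right ((Tm M).le_opNorm x) (norm_nonneg x)
    _ = spec M * (‖x‖ * ‖x‖) := by rw [spec_eq]; ring

lemma attain {p : ℕ} (M : Matrix (Fin p) (Fin p) ℝ) (hM : M.PosSemidef)
    (z : EuclideanSpace ℝ (Fin p)) (hz : ‖z‖ = 1) :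
    ∃ x : EuclideanSpace ℝ (Fin p), ‖x‖ = 1 ∧ ⟪Tm M x, x⟫ = spec M := by
  have hsymm : ∀ u v : EuclideanSpace ℝ (Fin p), ⟪Tm M u, v⟫ = ⟪u, Tm M v⟫ := fun u v =>
    (Matrix.isHermitian_iff_isSymmetric.1 hM.1) u v
  have hpos : ∀ u : EuclideanSpace ℝ (Fin p), 0 ≤ ⟪Tm M u, u⟫ := by
    intro u
    have h := hM.dotProduct_mulVec_nonneg (fun i => u i)
    rw [dot_eq] at h
    exact h
  have hcont : Continuous fun x : EuclideanSpace ℝ (Fin p) => ⟪Tm M x, x⟫ :=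
    Continuous.inner (Tm M).continuous continuous_id
  obtain ⟨x₀, hx₀s, hx₀max⟩ := (isCompact_sphere (0 : EuclideanSpace ℝ (Fin p)) 1).exists_isMaxOn
    ⟨z, by rwa [mem_sphere_zero_iff_norm]⟩ hcont.continuousOn
  have hx1 : ‖x₀‖ = 1 := mem_sphere_zero_iff_norm.1 hx₀s
  set m : ℝ := ⟪Tm M x₀, x₀⟫ with hm
  have hm0 : 0 ≤ m := hpos x₀
  have hub : ∀ u : EuclideanSpace ℝ (Fin p), ⟪Tm M u, u⟫ ≤ m * (‖u‖ * ‖u‖) := by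
    intro u
    rcases eq_or_ne u 0 with rfl | hu
    · simp
    · have hnu : 0 < ‖u‖ := norm_pos_iff.2 hu
      have hw : ‖((‖u‖⁻¹ : ℝ) • u : EuclideanSpace ℝ (Fin p))‖ = 1 := norm_smul_inv_norm hu
      have h1 : ⟪Tm M ((‖u‖⁻¹ : ℝ) • u), (‖u‖⁻¹ : ℝ) • u⟫ ≤ m :=
        isMaxOn_iff.1 hx₀max _ (by rwa [mem_sphere_zero_iff_norm])
      have h2 : ⟪Tm M ((‖u‖⁻¹ : ℝ) • u), (‖u‖⁻¹ : ℝ) • u⟫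
          = ‖u‖⁻¹ * (‖u‖⁻¹ * ⟪Tm M u, u⟫) := by
        rw [(Tm M).map_smul, real_inner_smul_left, real_inner_smul_right]
      rw [h2] at h1
      have h3 := mul_le_mul_of_nonneg_left h1 (mul_pos hnu hnu).le
      have h4 : ‖u‖ * ‖u‖ * (‖u‖⁻¹ * (‖u‖⁻¹ * ⟪Tm M u, u⟫)) = ⟪Tm M u, u⟫ := by
        field_simp
      calc ⟪Tm M u, u⟫ = ‖u‖ * ‖u‖ * (‖u‖⁻¹ * (‖u‖⁻¹ * ⟪Tm M u, u⟫)) := h4.symm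
        _ ≤ ‖u‖ * ‖u‖ * m := h3
        _ = m * (‖u‖ * ‖u‖) := by ring
  have hCS : ∀ u v : EuclideanSpace ℝ (Fin p),
      ⟪Tm M u, v⟫ ^ 2 ≤ ⟪Tm M u, u⟫ * ⟪Tm M v, v⟫ := by
    intro u v
    have hexp : ∀ s : ℝ, 0 ≤ ⟪Tm M v, v⟫ * (s * s) + (2 * ⟪Tm M u, v⟫) * s + ⟪Tm M u, u⟫ := by
      intro s
      have h := hpos (u + s • v)
      have heq : ⟪Tm M (u + s • v), u + s • v⟫
          = ⟪Tm M v, v⟫ * (s * s) + (2 * ⟪Tm M u, v⟫) * s + ⟪Tm M u, u⟫ := by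
        have huv : ⟪Tm M v, u⟫ = ⟪Tm M u, v⟫ := by
          rw [hsymm v u, real_inner_comm]
        rw [map_add, (Tm M).map_smul, inner_add_left, inner_add_right, inner_add_right,
          real_inner_smul_left, real_inner_smul_right, real_inner_smul_left,
          real_inner_smul_right, huv]
        ring
      rw [heq] at h
      exact h
    have hd := discrim_le_zero hexp
    rw [discrim] at hd
    nlinarith [hd]
  have hno : ‖Tm M‖ ≤ m := by
    apply ContinuousLinearMap.opNorm_le_bound _ hm0
    intro u
    have h1 : ⟪Tm M u, Tm M u⟫ = ‖Tm M u‖ * ‖Tm M u‖ :=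
      real_inner_self_eq_norm_mul_norm _
    have h2 := hCS u (Tm M u)
    have h3 := hub (Tm M u)
    have h4 := hub u
    have hb := mul_le_mul h4 h3 (hpos (Tm M u)) (by positivity)
    rw [h1] at h2
    have h5 : (‖Tm M u‖ * ‖Tm M u‖) ^ 2
        ≤ m * (‖u‖ * ‖u‖) * (m * (‖Tm M u‖ * ‖Tm M u‖)) := le_trans h2 hb
    rcases eq_or_lt_of_le (norm_nonneg (Tm M u)) with h0 | h0
    · rw [← h0]
      positivity
    · have hsq : ‖Tm M u‖ ^ 2 ≤ (m * ‖u‖) ^ 2 :=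
        le_of_mul_le_mul_right (by nlinarith [h5]) (mul_pos h0 h0)
      have h6 := Real.sqrt_le_sqrt hsq
      rwa [Real.sqrt_sq (norm_nonneg _), Real.sqrt_sq (mul_nonneg hm0 (norm_nonneg u))] at h6
  have hge : m ≤ ‖Tm M‖ := by
    calc m ≤ ‖Tm M x₀‖ * ‖x₀‖ := real_inner_le_norm _ _
      _ ≤ (‖Tm M‖ * ‖x₀‖) * ‖x₀‖ :=
          mul_le_mul_of_nonneg_right ((Tm M).le_opNorm x₀) (norm_nonneg x₀)
      _ = ‖Tm M‖ := by rw [hx1]; ring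
  exact ⟨x₀, hx1, by rw [spec_eq]; exact le_antisymm hge hno⟩

/-- Latent-factor monotonicity (strict, via size): for a unit vector `β` and symmetric PSD `Γ`,
if `a > ‖Γ‖₂`, then `t ↦ ‖t ββᵀ + Γ‖₂` is strictly increasing on `[a, ∞)`; in particular
`‖a' ββᵀ + Γ‖₂ > ‖a ββᵀ + Γ‖₂` whenever `a' > a > ‖Γ‖₂`. -/
theorem stmt14 {p : ℕ} (Γ : Matrix (Fin p) (Fin p) ℝ) (hΓ : Γ.PosSemidef)
    (β : Fin p → ℝ) (hβ0 : β ≠ 0) (hβ : ∑ i, (β i) ^ 2 = 1)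
    (a : ℝ) (ha : spec Γ < a) :
    StrictMonoOn (fun t : ℝ => spec (t • Matrix.vecMulVec β β + Γ)) (Set.Ici a) ∧
    ∀ a' : ℝ, a < a' →
      spec (a • Matrix.vecMulVec β β + Γ) < spec (a' • Matrix.vecMulVec β β + Γ) := by
  classical
  set βE : EuclideanSpace ℝ (Fin p) := (WithLp.equiv 2 (Fin p → ℝ)).symm β with hβEdef
  have hβEi : ∀ i, βE i = β i := fun i => rfl
  have hβnorm : ‖βE‖ = 1 := by
    rw [EuclideanSpace.norm_eq]
    have : ∑ i, ‖βE i‖ ^ 2 = 1 := by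
      simp only [hβEi, Real.norm_eq_abs, sq_abs]
      exact hβ
    rw [this, Real.sqrt_one]
  -- quadratic form identity
  have quad : ∀ (t : ℝ) (x : EuclideanSpace ℝ (Fin p)),
      ⟪Tm (t • Matrix.vecMulVec β β + Γ) x, x⟫
        = t * (∑ i, β i * x i) ^ 2 + ⟪Tm Γ x, x⟫ := by
    intro t x
    rw [inner_Tm, inner_Tm]
    simp only [Matrix.add_apply, Matrix.smul_apply, Matrix.vecMulVec_apply, smul_eq_mul]
    have key : ∑ i, (∑ j, t * (β i * β j) * x j) * x i = t * (∑ i, β i * x i) ^ 2 := by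
      calc ∑ i, (∑ j, t * (β i * β j) * x j) * x i
          = ∑ i, ∑ j, t * (β i * β j) * x j * x i := by
            exact Finset.sum_congr rfl fun i _ => Finset.sum_mul _ _ _
        _ = ∑ i, ∑ j, t * ((β i * x i) * (β j * x j)) := by
            refine Finset.sum_congr rfl fun i _ => Finset.sum_congr rfl fun j _ => by ring
        _ = t * (∑ i, β i * x i) ^ 2 := by
            rw [sq, Finset.sum_mul_sum, Finset.mul_sum]
            refine Finset.sum_congr rfl fun i _ => ?_
            rw [Finset.mul_sum]
    calc ∑ i, (∑ j, (t * (β i * β j) + Γ i j) * x j) * x i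
        = ∑ i, ((∑ j, t * (β i * β j) * x j) + ∑ j, Γ i j * x j) * x i := by
          refine Finset.sum_congr rfl fun i _ => ?_
          congr 1
          rw [← Finset.sum_add_distrib]
          exact Finset.sum_congr rfl fun j _ => add_mul _ _ _
      _ = (∑ i, (∑ j, t * (β i * β j) * x j) * x i) + ∑ i, (∑ j, Γ i j * x j) * x i := by
          rw [← Finset.sum_add_distrib]
          exact Finset.sum_congr rfl fun i _ => add_mul _ _ _
      _ = t * (∑ i, β i * x i) ^ 2 + ∑ i, (∑ j, Γ i j * x j) * x i := by rw [key]
  -- positive semidefiniteness of the perturbed matrices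
  have hpsd : ∀ t : ℝ, 0 ≤ t → (t • Matrix.vecMulVec β β + Γ).PosSemidef := by
    intro t ht
    refine .of_dotProduct_mulVec_nonneg ?_ ?_
    · ext i j
      have hΓij : Γ j i = Γ i j := by
        have h := congrFun (congrFun hΓ.1 i) j
        simpa [Matrix.conjTranspose_apply] using h
      simp [Matrix.conjTranspose_apply, Matrix.add_apply, Matrix.smul_apply,
        Matrix.vecMulVec_apply, hΓij, mul_comm (β j) (β i)]
    · intro x
      rw [dot_eq, quad]
      have h2 : 0 ≤ ⟪Tm Γ ((WithLp.equiv 2 (Fin p → ℝ)).symm x),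
          ((WithLp.equiv 2 (Fin p → ℝ)).symm x)⟫ := by
        rw [← dot_eq]
        exact hΓ.dotProduct_mulVec_nonneg x
      have h1 : 0 ≤ t * (∑ i, β i * ((WithLp.equiv 2 (Fin p → ℝ)).symm x) i) ^ 2 :=
        mul_nonneg ht (sq_nonneg _)
      linarith
  have ha0 : (0 : ℝ) ≤ a := le_trans (norm_nonneg _) ha.le
  have hΓβ : 0 ≤ ⟪Tm Γ βE, βE⟫ := by
    rw [hβEdef, ← dot_eq]
    exact hΓ.dotProduct_mulVec_nonneg β
  have hsum1 : (∑ i, β i * βE i) = 1 := by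
    rw [show (∑ i, β i * βE i) = ∑ i, β i ^ 2 from
      Finset.sum_congr rfl fun i _ => by rw [hβEi, sq]]
    exact hβ
  have main : ∀ s t : ℝ, a ≤ s → s < t →
      spec (s • Matrix.vecMulVec β β + Γ) < spec (t • Matrix.vecMulVec β β + Γ) := by
    intro s t has hst
    have hs0 : 0 ≤ s := le_trans ha0 has
    have ht0 : 0 ≤ t := le_trans hs0 hst.le
    obtain ⟨x₀, hx1, hx2⟩ := attain _ (hpsd s hs0) βE hβnorm
    -- lower bound: spec (M s) ≥ s
    have hlb : s ≤ spec (s • Matrix.vecMulVec β β + Γ) := by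
      have h1 := quad s βE
      rw [hsum1] at h1
      have h3 := inner_le_spec (s • Matrix.vecMulVec β β + Γ) βE
      rw [hβnorm] at h3
      simp only [mul_one] at h3
      nlinarith [hΓβ]
    have hq := quad s x₀
    rw [hx2] at hq
    have hg : ⟪Tm Γ x₀, x₀⟫ ≤ spec Γ := by
      have h := inner_le_spec Γ x₀
      rw [hx1] at h
      simpa using h
    set c : ℝ := (∑ i, β i * x₀ i) ^ 2 with hc
    have hc0 : 0 ≤ c := sq_nonneg _
    have hcpos : 0 < c := by
      rcases hc0.lt_or_eq with h | h
      · exact h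
      · exfalso
        rw [← h, mul_zero, zero_add] at hq
        linarith
    have hq2 := quad t x₀
    have h5 := inner_le_spec (t • Matrix.vecMulVec β β + Γ) x₀
    rw [hx1] at h5
    simp only [mul_one] at h5
    have h6 : t * c + ⟪Tm Γ x₀, x₀⟫ ≤ spec (t • Matrix.vecMulVec β β + Γ) := by
      rw [← hq2]; exact h5
    nlinarith [mul_pos (sub_pos.2 hst) hcpos]
  refine ⟨fun s hs t _ hst => main s t hs hst, fun a' ha' => main a a' le_rfl ha'⟩
end
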